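/- Let u be a permutation and n ≥ 1, and let (b¹, b²) be a good-n pair of length p = ℓ(u). Then in the Schubert polynomial 𝔖_{1^n × u}, the coefficients of the monomials X_{b¹} and X_{b²} are equal. -/

import Mathlib

/-- `i` is an `a`-compatible sequence. -/
def Compatible {p : ℕ} (a i : Fin p → ℕ) : Prop :=
  Monotone i ∧ (∀ j, i j ≤ a j) ∧
    ∀ (j : Fin p) (h : (j : ℕ) + 1 < p),
      a j < a ⟨(j : ℕ) + 1, h⟩ → i j < i ⟨(j : ℕ) + 1, h⟩

/-- The product of simple transpositions (`s_k = (k, k+1)`, 0-indexed) of a word. -/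
def wordProd {p : ℕ} (a : Fin p → ℕ) : Equiv.Perm ℕ :=
  (List.ofFn fun j => Equiv.swap (a j) (a j + 1)).prod

/-- `a` is a reduced word for `w`: a word for `w` of minimal length. -/
def IsReducedWord {p : ℕ} (w : Equiv.Perm ℕ) (a : Fin p → ℕ) : Prop :=
  wordProd a = w ∧ ∀ (q : ℕ) (b : Fin q → ℕ), wordProd b = w → p ≤ q

/-- The permutation `1^n × w`: `n` fixed points prepended to `w` (0-indexed). -/
def shiftP (n : ℕ) (w : Equiv.Perm ℕ) : Equiv.Perm ℕ where
  toFun k := if k < n then k else w (k - n) + n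
  invFun k := if k < n then k else w⁻¹ (k - n) + n
  left_inv k := by
    by_cases h : k < n
    · simp [h]
    · have h2 : ¬ (w (k - n) + n < n) := by omega
      simp only [if_neg h, if_neg h2, Nat.add_sub_cancel, (by simp : w⁻¹ (w (k - n)) = k - n)]
      omega
  right_inv k := by
    by_cases h : k < n
    · simp [h]
    · have h2 : ¬ (w⁻¹ (k - n) + n < n) := by omega
      simp only [if_neg h, if_neg h2, Nat.add_sub_cancel, (by simp : w (w⁻¹ (k - n)) = k - n)]
      omega


private def P (l : List ℕ) : Equiv.Perm ℕ := (l.map fun k => Equiv.swap k (k + 1)).prod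

private lemma P_cons (k : ℕ) (t : List ℕ) : P (k :: t) = Equiv.swap k (k + 1) * P t := by
  simp [P]

private lemma P_append (l₁ l₂ : List ℕ) : P (l₁ ++ l₂) = P l₁ * P l₂ := by
  simp [P]

private lemma swap_reverse {k x y : ℕ} (hxy : x < y)
    (h : Equiv.swap k (k + 1) y < Equiv.swap k (k + 1) x) : x = k ∧ y = k + 1 := by
  simp only [Equiv.swap_apply_def] at h
  split_ifs at h <;> omega

/-- Deletion/exchange: if `P l` reverses `m, m+1` then `P l * s_m` has a word one shorter. -/
private lemma deletion : ∀ (l : List ℕ) (m : ℕ), P l (m + 1) < P l m →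
    ∃ l' : List ℕ, l'.length + 1 = l.length ∧ P l' = P l * Equiv.swap m (m + 1) := by
  intro l
  induction l with
  | nil => intro m h; simp [P] at h
  | cons k t ih =>
    intro m h
    rw [P_cons] at h
    by_cases hv : P t (m + 1) < P t m
    · obtain ⟨t', hlen, hprod⟩ := ih m hv
      refine ⟨k :: t', by simp [← hlen], ?_⟩
      rw [P_cons, P_cons, hprod, mul_assoc]
    · have hne : P t m ≠ P t (m + 1) := fun he => by
        have := (P t).injective he; omega
      have hv' : P t m < P t (m + 1) := by omega
      simp only [Equiv.Perm.mul_apply] at h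
      obtain ⟨h1, h2⟩ := swap_reverse hv' h
      refine ⟨t, by simp, ?_⟩
      have hc : Equiv.swap k (k + 1) = P t * Equiv.swap m (m + 1) * (P t)⁻¹ := by
        rw [← Equiv.swap_apply_apply, h1, h2]
      rw [P_cons, hc]
      simp [mul_assoc, Equiv.swap_mul_self]

private lemma P_fix (m : ℕ) : ∀ (l : List ℕ), (∀ k ∈ l, m < k) → P l m = m := by
  intro l
  induction l with
  | nil => intro _; simp [P]
  | cons k t ih =>
    intro h
    rw [P_cons, Equiv.Perm.mul_apply, ih (fun x hx => h x (by simp [hx]))]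
    have hk : m < k := h k (by simp)
    rw [Equiv.swap_apply_of_ne_of_ne (by omega) (by omega)]

private lemma P_ge (m : ℕ) : ∀ (l : List ℕ), (∀ k ∈ l, m ≤ k) → ∀ x, m ≤ x → m ≤ P l x := by
  intro l
  induction l with
  | nil => intro _ x hx; simpa [P] using hx
  | cons k t ih =>
    intro h x hx
    rw [P_cons, Equiv.Perm.mul_apply]
    have hy := ih (fun a ha => h a (by simp [ha])) x hx
    have hk : m ≤ k := h k (by simp)
    rw [Equiv.swap_apply_def]
    split_ifs <;> omega

private lemma split_last {m : ℕ} : ∀ (l : List ℕ), m ∈ l →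
    ∃ s t : List ℕ, l = s ++ m :: t ∧ m ∉ t := by
  intro l
  induction l with
  | nil => intro h; simp at h
  | cons a t ih =>
    intro h
    by_cases hm : m ∈ t
    · obtain ⟨s', t', he, hn⟩ := ih hm
      exact ⟨a :: s', t', by simp [he], hn⟩
    · have : m = a := by
        rcases List.mem_cons.mp h with h' | h'
        · exact h'
        · exact absurd h' hm
      exact ⟨[], t, by simp [this], hm⟩

/-- If all letters are `≥ m`, `m` occurs, and the product fixes `m`, the word can be
shortened by two. -/
private lemma shorten (l : List ℕ) (m : ℕ) (hge : ∀ k ∈ l, m ≤ k) (hmem : m ∈ l)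
    (hfix : P l m = m) : ∃ l' : List ℕ, l'.length + 2 = l.length ∧ P l' = P l := by
  obtain ⟨s, t, rfl, hnt⟩ := split_last l hmem
  have htgt : ∀ k ∈ t, m < k := fun k hk => by
    have := hge k (by simp [hk])
    rcases this.lt_or_eq with h | h
    · exact h
    · exact absurd (h ▸ hk) hnt
  have hPt : P t m = m := P_fix m t htgt
  have hkey : P s (m + 1) = m := by
    have : P (s ++ m :: t) m = P s (Equiv.swap m (m + 1) (P t m)) := by
      rw [P_append, P_cons]; simp [Equiv.Perm.mul_apply]
    rw [hfix, hPt, Equiv.swap_apply_left] at this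
    exact this.symm
  have hsge : ∀ k ∈ s, m ≤ k := fun k hk => hge k (by simp [hk])
  have hgem : m ≤ P s m := P_ge m s hsge m le_rfl
  have hne : P s m ≠ m := fun he => by
    have := (P s).injective (he.trans hkey.symm); omega
  have hlt : P s (m + 1) < P s m := by omega
  obtain ⟨s', hlen, hprod⟩ := deletion s m hlt
  refine ⟨s' ++ t, ?_, ?_⟩
  · simp [List.length_append] at *; omega
  · rw [P_append, P_append, P_cons, hprod]
    simp [mul_assoc, Equiv.swap_mul_self]

private lemma wordProd_eq_P {p : ℕ} (a : Fin p → ℕ) : wordProd a = P (List.ofFn a) := by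
  simp [wordProd, P, List.map_ofFn, Function.comp_def]

private lemma shiftP_fix (n : ℕ) (u : Equiv.Perm ℕ) {m : ℕ} (hm : m < n) :
    shiftP n u m = m := by
  simp [shiftP, hm]

/-- All letters of a reduced word for `shiftP n u` are `≥ n`. -/
private lemma letters_ge {n p : ℕ} (u : Equiv.Perm ℕ) (a : Fin p → ℕ)
    (h : IsReducedWord (shiftP n u) a) : ∀ j, n ≤ a j := by
  intro j
  by_contra hj
  push_neg at hj
  have hne : (Finset.univ : Finset (Fin p)).Nonempty := ⟨j, Finset.mem_univ j⟩
  obtain ⟨j₀, _, hmin⟩ := Finset.exists_min_image Finset.univ a hne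
  set m := a j₀ with hm
  have hmn : m < n := lt_of_le_of_lt (hmin j (Finset.mem_univ j)) hj
  have hge : ∀ k ∈ List.ofFn a, m ≤ k := by
    intro k hk
    obtain ⟨i, rfl⟩ := List.mem_ofFn.mp hk
    exact hmin i (Finset.mem_univ i)
  have hmem : m ∈ List.ofFn a := List.mem_ofFn.mpr ⟨j₀, rfl⟩
  have hfix : P (List.ofFn a) m = m := by
    rw [← wordProd_eq_P, h.1]; exact shiftP_fix n u hmn
  obtain ⟨l', hlen, hprod⟩ := shorten (List.ofFn a) m hge hmem hfix
  have hword : wordProd l'.get = shiftP n u := by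
    rw [wordProd_eq_P]
    have : List.ofFn l'.get = l' := List.ofFn_get l'
    rw [this, hprod, ← wordProd_eq_P, h.1]
  have := h.2 l'.length l'.get hword
  simp [List.length_ofFn] at hlen
  omega

/-- Let `u` be a permutation, `n ≥ 1`, and `(b¹, b²)` a good-`n` pair of length
`p = ℓ(u) = ℓ(1^n × u)`: both weakly increasing, `b¹ ≤ b²` termwise, strictly increasing
at the same indices, and all entries bounded by `n` (0-indexed: `< n`).  Then in
`𝔖_{1^n × u}` the coefficients of `X_{b¹}` and `X_{b²}` agree, i.e. the numbers of pairs
(reduced word `a`, `a`-compatible sequence equal to `bⁱ`) coincide. -/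
theorem stmt14 (N n p : ℕ) (hn : 1 ≤ n) (u : Equiv.Perm ℕ)
    (hsupp : ∀ k, N ≤ k → u k = k)
    (hp : ∃ a : Fin p → ℕ, IsReducedWord (shiftP n u) a)
    (b1 b2 : Fin p → ℕ)
    (hmono1 : Monotone b1) (hmono2 : Monotone b2)
    (hle : ∀ j, b1 j ≤ b2 j)
    (hsim : ∀ (j : Fin p) (h : (j : ℕ) + 1 < p),
      (b1 j < b1 ⟨(j : ℕ) + 1, h⟩ ↔ b2 j < b2 ⟨(j : ℕ) + 1, h⟩))
    (hbd : ∀ j, b1 j < n ∧ b2 j < n) :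
    Set.ncard {a : Fin p → ℕ | IsReducedWord (shiftP n u) a ∧ Compatible a b1} =
      Set.ncard {a : Fin p → ℕ | IsReducedWord (shiftP n u) a ∧ Compatible a b2} := by
  have key : {a : Fin p → ℕ | IsReducedWord (shiftP n u) a ∧ Compatible a b1} =
      {a : Fin p → ℕ | IsReducedWord (shiftP n u) a ∧ Compatible a b2} := by
    ext a
    simp only [Set.mem_setOf_eq, Compatible]
    constructor
    · rintro ⟨hred, _, _, hstr⟩
      have hge := letters_ge u a hred
      exact ⟨hred, hmono2, fun j => le_of_lt (lt_of_lt_of_le (hbd j).2 (hge j)),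
        fun j h hj => (hsim j h).mp (hstr j h hj)⟩
    · rintro ⟨hred, _, _, hstr⟩
      have hge := letters_ge u a hred
      exact ⟨hred, hmono1, fun j => le_of_lt (lt_of_lt_of_le (hbd j).1 (hge j)),
        fun j h hj => (hsim j h).mpr (hstr j h hj)⟩
  rw [key]
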